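/- Let 𝕂 be a field, q ∈ 𝕂ˣ, and k ∈ ℕ. Given μ₀, …, μ_{k-1} ∈ 𝕂 with ∑_{i=0}^{k-1} q^{-i(i+1)/2} μ_i = 0, there exists a unique tuple (λ₀, …, λ_k) ∈ 𝕂^{k+1} with λ₀ = λ_k = 0 and μ_i = λ_{i+1} - q^i λ_i for all 0 ≤ i ≤ k-1; moreover λ_i = ∑_{j=0}^{i-1} q^{(i+j)(i-j-1)/2} μ_j for all 0 ≤ i ≤ k. -/
import Mathlib


variable {K : Type*} [Field K]

/-- The q-number `(k)_x = ∑_{i=0}^{k-1} x^i`. -/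
def qNum (x : K) (k : ℕ) : K := ∑ i ∈ Finset.range k, x ^ i

/-- The q-factorial `(m)_q! = ∏_{k=1}^m (k)_q`. -/
def qFac (q : K) (m : ℕ) : K := ∏ k ∈ Finset.range m, qNum q (k + 1)

/-- `b_m = ∏_{i=0}^{m-1} (1 - q^i r)`. -/
def bProd (q r : K) (m : ℕ) : K := ∏ i ∈ Finset.range m, (1 - q ^ i * r)

/-- The recursively defined set 𝕁 = 𝕁^p_{q,r,s}. -/
def memJ (q r s : K) : ℕ → Prop
  | j => q ^ (j * (j - 1) / 2) * (-r) ^ j * s = -1 ∧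
      ∀ n, n < j → memJ q r s n →
        if (j - n) % 2 = 0
        then qNum (q ^ (n + j - 1) * r ^ 2) ((j - n) / 2) = 0
        else qNum (-(q ^ ((n + j - 1) / 2) * r)) (j - n) = 0
  termination_by j => j

/-- The subset 𝕁₁ ⊆ 𝕁 (condition (1) of Lemma le:J). -/
def memJ1 (q r s : K) (j : ℕ) : Prop :=
  memJ q r s j ∧ ∀ k, k < j → memJ q r s k → q ^ (k + j - 1) * r ^ 2 ≠ 1

/-- The subset 𝕁₂ ⊆ 𝕁 (condition (2) of Lemma le:J). -/
def memJ2 (q r s : K) (n : ℕ) : Prop :=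
  memJ q r s n ∧ ∃ j, j < n ∧ memJ q r s j ∧ q ^ (n + j - 1) * r ^ 2 = 1

lemma expAux (n j : ℕ) (h : j < n) :
    (n + 1 + j) * (n + 1 - j - 1) / 2 = n + (n + j) * (n - j - 1) / 2 := by
  obtain ⟨t, rfl⟩ : ∃ t, n = j + 1 + t := ⟨n - j - 1, by omega⟩
  have h1 : (j + 1 + t + 1 + j) * (j + 1 + t + 1 - j - 1) = (j + 1 + t + j) * t + 2 * (j + 1 + t) := by
    have e : j + 1 + t + 1 - j - 1 = t + 1 := by omega
    rw [e]; ring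
  have h2 : j + 1 + t - j - 1 = t := by omega
  rw [h2]
  have heven : ((j + 1 + t + j) * t) % 2 = 0 := by
    rcases Nat.even_or_odd t with ⟨c, rfl⟩ | ⟨c, rfl⟩
    · have : (j + 1 + (c + c) + j) * (c + c) = 2 * ((j + 1 + (c + c) + j) * c) := by ring
      rw [this]; omega
    · have : (j + 1 + (2 * c + 1) + j) * (2 * c + 1) = 2 * ((j + c + 1) * (2 * c + 1)) := by ring
      rw [this]; omega
  generalize hA : (j + 1 + t + j) * t = A at *
  omega

lemma expAux2 (k j : ℕ) (h : j < k) :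
    (k + j) * (k - j - 1) / 2 + j * (j + 1) / 2 = k * (k - 1) / 2 := by
  obtain ⟨t, rfl⟩ : ∃ t, k = j + 1 + t := ⟨k - j - 1, by omega⟩
  have h2 : j + 1 + t - j - 1 = t := by omega
  have h3 : j + 1 + t - 1 = j + t := by omega
  rw [h2, h3]
  have h1 : (j + 1 + t) * (j + t) = (j + 1 + t + j) * t + j * (j + 1) := by ring
  have he1 : ((j + 1 + t + j) * t) % 2 = 0 := by
    rcases Nat.even_or_odd t with ⟨c, rfl⟩ | ⟨c, rfl⟩
    · have : (j + 1 + (c + c) + j) * (c + c) = 2 * ((j + 1 + (c + c) + j) * c) := by ring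
      rw [this]; omega
    · have : (j + 1 + (2 * c + 1) + j) * (2 * c + 1) = 2 * ((j + c + 1) * (2 * c + 1)) := by ring
      rw [this]; omega
  have he2 : (j * (j + 1)) % 2 = 0 := by
    rcases Nat.even_or_odd j with ⟨c, rfl⟩ | ⟨c, rfl⟩
    · have : (c + c) * ((c + c) + 1) = 2 * (c * (c + c + 1)) := by ring
      rw [this]; omega
    · have : (2 * c + 1) * ((2 * c + 1) + 1) = 2 * ((2 * c + 1) * (c + 1)) := by ring
      rw [this]; omega
  generalize hA : (j + 1 + t + j) * t = A at *
  generalize hB : j * (j + 1) = B at *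
  generalize hC : (j + 1 + t) * (j + t) = C at *
  omega

lemma stepSum (q : K) (μ : ℕ → K) (i : ℕ) :
    ∑ j ∈ Finset.range (i + 1), q ^ ((i + 1 + j) * (i + 1 - j - 1) / 2) * μ j
      = q ^ i * ∑ j ∈ Finset.range i, q ^ ((i + j) * (i - j - 1) / 2) * μ j + μ i := by
  rw [Finset.sum_range_succ, Finset.mul_sum]
  congr 1
  · refine Finset.sum_congr rfl fun j hj => ?_
    rw [Finset.mem_range] at hj
    rw [expAux i j hj, pow_add, mul_assoc]
  · have e : i + 1 - i - 1 = 0 := by omega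
    rw [e, Nat.mul_zero]
    simp

theorem stmt_11 (q : K) (hq : q ≠ 0) (k : ℕ) (hk : 0 < k) (μ : ℕ → K)
    (hμ : ∑ i ∈ Finset.range k, (q ^ (i * (i + 1) / 2))⁻¹ * μ i = 0) :
    (∃! l : Fin (k + 1) → K,
      l ⟨0, by omega⟩ = 0 ∧ l ⟨k, by omega⟩ = 0 ∧
        ∀ i : ℕ, (hi : i < k) →
          μ i = l ⟨i + 1, by omega⟩ - q ^ i * l ⟨i, by omega⟩) ∧
    ∀ l : Fin (k + 1) → K,
      (l ⟨0, by omega⟩ = 0 ∧ l ⟨k, by omega⟩ = 0 ∧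
        ∀ i : ℕ, (hi : i < k) →
          μ i = l ⟨i + 1, by omega⟩ - q ^ i * l ⟨i, by omega⟩) →
      ∀ i : ℕ, (hi : i ≤ k) →
        l ⟨i, by omega⟩ = ∑ j ∈ Finset.range i, q ^ ((i + j) * (i - j - 1) / 2) * μ j := by
  have form : ∀ l : Fin (k + 1) → K,
      (l ⟨0, by omega⟩ = 0 ∧ l ⟨k, by omega⟩ = 0 ∧
        ∀ i : ℕ, (hi : i < k) →
          μ i = l ⟨i + 1, by omega⟩ - q ^ i * l ⟨i, by omega⟩) →
      ∀ i : ℕ, (hi : i ≤ k) →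
        l ⟨i, by omega⟩ = ∑ j ∈ Finset.range i, q ^ ((i + j) * (i - j - 1) / 2) * μ j := by
    rintro l ⟨h0, hke, hrec⟩ i
    induction i with
    | zero => intro _; simpa using h0
    | succ n ih =>
      intro hi
      have hn : n < k := by omega
      have hstep : l ⟨n + 1, by omega⟩ = q ^ n * l ⟨n, by omega⟩ + μ n := by
        have h := hrec n hn
        linear_combination -h
      rw [hstep, ih (by omega), stepSum q μ n]
  refine ⟨⟨fun m => ∑ j ∈ Finset.range (m : ℕ),
      q ^ (((m : ℕ) + j) * ((m : ℕ) - j - 1) / 2) * μ j, ⟨?_, ?_, ?_⟩, ?_⟩, form⟩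
  · simp
  · show ∑ j ∈ Finset.range k, q ^ ((k + j) * (k - j - 1) / 2) * μ j = 0
    have key : ∀ j ∈ Finset.range k, q ^ ((k + j) * (k - j - 1) / 2) * μ j
        = q ^ (k * (k - 1) / 2) * ((q ^ (j * (j + 1) / 2))⁻¹ * μ j) := by
      intro j hj
      rw [Finset.mem_range] at hj
      have h1 : q ^ ((k + j) * (k - j - 1) / 2)
          = q ^ (k * (k - 1) / 2) * (q ^ (j * (j + 1) / 2))⁻¹ := by
        rw [eq_mul_inv_iff_mul_eq₀ (pow_ne_zero _ hq), ← pow_add, expAux2 k j hj]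
      rw [h1, mul_assoc]
    rw [Finset.sum_congr rfl key, ← Finset.mul_sum, hμ, mul_zero]
  · intro i hi
    show μ i = (∑ j ∈ Finset.range (i + 1), q ^ ((i + 1 + j) * (i + 1 - j - 1) / 2) * μ j)
      - q ^ i * ∑ j ∈ Finset.range i, q ^ ((i + j) * (i - j - 1) / 2) * μ j
    rw [stepSum q μ i]
    ring
  · intro l' hl'
    funext m
    have h1 := form l' hl' m.1 (Nat.lt_succ_iff.mp m.isLt)
    exact h1
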